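/- Existence of auxiliary variables dominating the parabolic PINN loss (Theorem 3.4). For all parameters W₁∈ℝ^{M×(d+1)}, b₁∈ℝ^M, W₂∈ℝ^{M×M}, b₂∈ℝ^M, W₃∈ℝ^{1×M}, b₃∈ℝ, there exist auxiliary variables a₁, a₂ ∈ ℝ^{M×N}, d_{1i}, d_{2i} ∈ ℝ^{M×N} (i = 0,…,d), and q_i ∈ ℝ^{M×N} (i = 1,…,d) such that J^p_S ≤ J^p. In particular, the canonical choice a₁ = W₁X_T+b₁𝟙ᵀ, a₂ = W₂σ(a₁)+b₂𝟙ᵀ, d_{1i} = W₁(:,i+1)𝟙ᵀ, d_{2i} = W₂(σ'(a₁)*d_{1i}), q_i = W₂(σ''(a₁)*d_{1i}*d_{1i}) makes all penalty terms of J^p_S vanish and achieves J^p_S ≤ J^p. -/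

import Mathlib

open scoped BigOperators

noncomputable section

/-- Partial derivative `∂_{z_i} f` at `z`. -/
def pd {m : ℕ} (f : (Fin m → ℝ) → ℝ) (i : Fin m) (z : Fin m → ℝ) : ℝ :=
  fderiv ℝ f z (Pi.single i 1)

/-- Squared Euclidean norm of the `n`-th column of an `M × N` matrix. -/
def colSq {M N : ℕ} (A : Fin M → Fin N → ℝ) (n : Fin N) : ℝ := ∑ j, (A j n) ^ 2

/-- Squared Frobenius norm of an `M × N` matrix. -/
def froSq {M N : ℕ} (A : Fin M → Fin N → ℝ) : ℝ := ∑ n, colSq A n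

/-- Squared Frobenius norm of a row vector (`1 × N` matrix). -/
def vSq {N : ℕ} (v : Fin N → ℝ) : ℝ := ∑ n, (v n) ^ 2

/-- Entrywise sup-norm `|v|_∞` of a row vector. -/
def nsup {N : ℕ} (v : Fin N → ℝ) : ℝ := ⨆ n, |v n|

/-- Weighted squared norm `‖A‖_D²`, where `Dsq n = D(n,n)²` are the squared diagonal
entries of the diagonal weight matrix `D`. -/
def wSq {M N : ℕ} (Dsq : Fin N → ℝ) (A : Fin M → Fin N → ℝ) : ℝ := ∑ n, Dsq n * colSq A n

/-- The constant `C₁ = max{B_{σ'}·max{1,B_{σ'}}, C_{σ'}·max{1,B_{σ'},C_σ}}`. -/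
def constC1 (Cσ Cσ' Bσ' : ℝ) : ℝ :=
  max (Bσ' * max 1 Bσ') (Cσ' * max (max 1 Bσ') Cσ)

/-- The constant `C₂`. -/
def constC2 (Cσ' Cσ'' Bσ' Bσ'' : ℝ) : ℝ :=
  max (Bσ'' * max (max (max (max 1 Bσ') Cσ') (Bσ' ^ 2)) (Bσ' * Cσ'))
    (max 1 Cσ' * max Cσ' (Bσ' * Cσ''))

/-- The constant `C = max{1, 2C_σ², 2C_σ⁴, 5C₁², 14C₂²}`. -/
def constC (Cσ Cσ' Cσ'' Bσ' Bσ'' : ℝ) : ℝ :=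
  max (max (max (max 1 (2 * Cσ ^ 2)) (2 * Cσ ^ 4)) (5 * constC1 Cσ Cσ' Bσ' ^ 2))
    (14 * constC2 Cσ' Cσ'' Bσ' Bσ'' ^ 2)

/-- Data of the parabolic PINN model with a three-layer fully connected network:
activation `σ`, PDE coefficient `c`, time samples `T0` with `(t_n, x_n)` the feature
points, data `Y`, and network parameters.  The network input is `[t; x] ∈ ℝ^{d+1}`,
with coordinate `0` the time variable. -/
structure ParData (d M N : ℕ) where
  σ : ℝ → ℝ
  c : (Fin d → ℝ) → ℝ
  T0 : Fin N → ℝ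
  X : Fin d → Fin N → ℝ
  Y : Fin N → ℝ
  W1 : Fin M → Fin (d + 1) → ℝ
  b1 : Fin M → ℝ
  W2 : Fin M → Fin M → ℝ
  b2 : Fin M → ℝ
  W3 : Fin M → ℝ
  b3 : ℝ

/-- Auxiliary variables of the parabolic LySep model: `a₁, a₂`, the derivatives
`d_{1i}, d_{2i}` for `i = 0, …, d` (index `0` is the time derivative), and `q_i`
for `i = 1, …, d`. -/
structure ParAux (d M N : ℕ) where
  a1 : Fin M → Fin N → ℝ
  a2 : Fin M → Fin N → ℝ
  d1 : Fin (d + 1) → Fin M → Fin N → ℝ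
  d2 : Fin (d + 1) → Fin M → Fin N → ℝ
  q  : Fin d → Fin M → Fin N → ℝ

namespace ParData

variable {d M N : ℕ} (P : ParData d M N) (A : ParAux d M N)

/-- `σ'` -/
def σ' : ℝ → ℝ := deriv P.σ

/-- `σ''` -/
def σ'' : ℝ → ℝ := deriv (deriv P.σ)

/-- the `n`-th column of `X_T = [T₀; X]`, i.e. the point `(t_n, x_n)` -/
def z (n : Fin N) : Fin (d + 1) → ℝ := Fin.cons (P.T0 n) (fun i => P.X i n)

/-- the three-layer network `φ([t;x];θ) = W₃σ(W₂σ(W₁[t;x]+b₁)+b₂)+b₃` -/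
def phi (y : Fin (d + 1) → ℝ) : ℝ :=
  (∑ j, P.W3 j * P.σ ((∑ k, P.W2 j k * P.σ ((∑ i, P.W1 k i * y i) + P.b1 k)) + P.b2 j)) + P.b3

/-- `ψ_p(t,x) = t(‖x‖₂² − 1)φ(t,x;θ)` -/
def psiP (y : Fin (d + 1) → ℝ) : ℝ :=
  y 0 * ((∑ i : Fin d, (y i.succ) ^ 2) - 1) * P.phi y

/-- the `n`-th entry of the parabolic PINN residual
`(∂_tψ_p − Σ_i ∂_{x_i}(c·∂_{x_i}ψ_p))(X_T) − Y` -/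
def pinnRes (n : Fin N) : ℝ :=
  pd P.psiP 0 (P.z n)
    - (∑ i : Fin d,
        pd (fun y => P.c (fun i' => y i'.succ) * pd P.psiP i.succ y) i.succ (P.z n))
    - P.Y n

/-- the PINN loss `J^p` -/
def Jp : ℝ := (1 / (N : ℝ)) * ∑ n, (P.pinnRes n) ^ 2

/-- `c(X)` -/
def cX : Fin N → ℝ := fun n => P.c (fun i => P.X i n)

/-- `∂_{x_i} c(X)` -/
def dcX (i : Fin d) : Fin N → ℝ := fun n => pd P.c i (fun i' => P.X i' n)

/-- `X̂`, the row vector of `‖x_n‖₂²` -/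
def Xhat : Fin N → ℝ := fun n => ∑ i, (P.X i n) ^ 2

/-- `K^p = (X̂−1) − 2d·c(X)*T₀ − 2T₀*Σ_i ∂_{x_i}c(X)*X(i,:)` -/
def Kp : Fin N → ℝ :=
  fun n => (P.Xhat n - 1) - 2 * (d : ℝ) * P.cX n * P.T0 n
    - 2 * P.T0 n * ∑ i, P.dcX i n * P.X i n

/-- `K^p_0 = T₀*(X̂−1)` -/
def Kp0 : Fin N → ℝ := fun n => P.T0 n * (P.Xhat n - 1)

/-- `K^p_i = T₀*((X̂−1)*∂_{x_i}c(X) + 4X(i,:)*c(X))` for `i = 1, …, d` -/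
def Kpi (i : Fin d) : Fin N → ℝ :=
  fun n => P.T0 n * ((P.Xhat n - 1) * P.dcX i n + 4 * P.X i n * P.cX n)

/-- `K^p_i` for `i = 0, …, d` -/
def KpAll : Fin (d + 1) → Fin N → ℝ := Fin.cons P.Kp0 (fun i => P.Kpi i)

/-- `K̂^p = c(X)*T₀*(X̂−1)` -/
def Khat : Fin N → ℝ := fun n => P.cX n * P.T0 n * (P.Xhat n - 1)

/-- `‖W₃‖_F²` -/
def w3sq : ℝ := ∑ j, (P.W3 j) ^ 2

/-- `‖W₂‖_F²` -/
def w2sq : ℝ := ∑ j, ∑ k, (P.W2 j k) ^ 2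

/-- `‖W₁(:,i+1)‖₂²` (column `i` with the `0`-based time-first indexing) -/
def w1colSq (i : Fin (d + 1)) : ℝ := ∑ j, (P.W1 j i) ^ 2

/-- the `n`-th entry of the parabolic LySep residual
`K^p*(W₃σ(a₂)+b₃𝟙ᵀ) + K^p_0*(W₃(σ'(a₂)*d_{2,0})) − Σ_i K^p_i*(W₃(σ'(a₂)*d_{2i}))
− K̂^p*Σ_i W₃(σ''(a₂)*d_{2i}*d_{2i}+σ'(a₂)*q_i) − Y` -/
def sRes (n : Fin N) : ℝ :=
  P.Kp n * ((∑ j, P.W3 j * P.σ (A.a2 j n)) + P.b3)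
    + P.Kp0 n * (∑ j, P.W3 j * (P.σ' (A.a2 j n) * A.d2 0 j n))
    - (∑ i : Fin d, P.Kpi i n * ∑ j, P.W3 j * (P.σ' (A.a2 j n) * A.d2 i.succ j n))
    - P.Khat n *
        (∑ i : Fin d, ∑ j, P.W3 j *
          (P.σ'' (A.a2 j n) * A.d2 i.succ j n * A.d2 i.succ j n + P.σ' (A.a2 j n) * A.q i j n))
    - P.Y n

/-- constraint residual `W₁X_T + b₁𝟙ᵀ − a₁` -/
def Ra1 : Fin M → Fin N → ℝ := fun j n => (∑ i, P.W1 j i * P.z n i) + P.b1 j - A.a1 j n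

/-- constraint residual `W₂σ(a₁) + b₂𝟙ᵀ − a₂` -/
def Ra2 : Fin M → Fin N → ℝ := fun j n => (∑ k, P.W2 j k * P.σ (A.a1 k n)) + P.b2 j - A.a2 j n

/-- constraint residual `W₁(:,i+1)𝟙ᵀ − d_{1i}` for `i = 0, …, d` -/
def Rd1 (i : Fin (d + 1)) : Fin M → Fin N → ℝ := fun j n => P.W1 j i - A.d1 i j n

/-- constraint residual `W₂(σ'(a₁)*d_{1i}) − d_{2i}` for `i = 0, …, d` -/
def Rd2 (i : Fin (d + 1)) : Fin M → Fin N → ℝ :=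
  fun j n => (∑ k, P.W2 j k * (P.σ' (A.a1 k n) * A.d1 i k n)) - A.d2 i j n

/-- constraint residual `W₂(σ''(a₁)*d_{1i}*d_{1i}) − q_i` for `i = 1, …, d` -/
def Rq (i : Fin d) : Fin M → Fin N → ℝ :=
  fun j n =>
    (∑ k, P.W2 j k * (P.σ'' (A.a1 k n) * A.d1 i.succ k n * A.d1 i.succ k n)) - A.q i j n

/-- `D_{a₂}¹(n,n)²` -/
def Da2_1sq (n : Fin N) : ℝ :=
  nsup P.Kp ^ 2 + (∑ i : Fin (d + 1), nsup (P.KpAll i) ^ 2 * colSq (A.d2 i) n)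
    + nsup P.Khat ^ 2 * ∑ i : Fin d, colSq (A.q i) n

/-- `D_{a₂}^{2i}(n,n)²` -/
def Da2_2sq (i : Fin d) (n : Fin N) : ℝ := nsup P.Khat ^ 2 * colSq (A.d2 i.succ) n

/-- `D_{a₁}^{2i}(n,n)²` -/
def Da1_2sq (i : Fin d) (n : Fin N) : ℝ := nsup P.Khat ^ 2 * colSq (A.d1 i.succ) n

/-- `D_{a₁}^{3i}(n,n)²` -/
def Da1_3sq (i : Fin d) (n : Fin N) : ℝ := P.Da1_2sq A i n + P.Da2_2sq A i n

/-- `D_{a₁}¹(n,n)²` -/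
def Da1_1sq (n : Fin N) : ℝ :=
  P.Da2_1sq A n + (∑ i : Fin (d + 1), nsup (P.KpAll i) ^ 2 * colSq (A.d1 i) n)
    + ∑ i : Fin d, P.Da1_2sq A i n * colSq (A.d2 i.succ) n

/-- `D_{d_{1i}}²(n,n)²` -/
def Dd1_2sq (i : Fin d) (n : Fin N) : ℝ := nsup (P.Kpi i) ^ 2 + P.Da1_3sq A i n

/-- `D_{d_{2i}}¹(n,n)²` -/
def Dd2_1sq (i : Fin d) (n : Fin N) : ℝ := nsup (P.Kpi i) ^ 2 + P.Da2_2sq A i n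

/-- the parabolic LySep loss `J^p_S` with self-adaptive weights
`ω_{a₁}¹ = ω_{d_{1i}}² = ‖W₃‖²‖W₂‖²`, `ω_{a₁}^{2i} = ω_{a₂}^{2i} = ω_{a₁}¹‖W₁(:,i+1)‖₂²`,
`ω_{a₁}^{3i} = ω_{a₁}^{2i}‖W₂‖²`, `ω_{a₂}¹ = ω_{d_{2i}}¹ = ‖W₃‖²`,
`ω_{d10} = |K^p_0|_∞²ω_{a₁}¹`, `ω_{d20} = |K^p_0|_∞²ω_{a₂}¹`,
`ω_{d_{1i}}¹ = |K̂^p|_∞²(ω_{a₁}^{2i}+ω_{a₁}^{3i})`, `ω_{d_{2i}}² = |K̂^p|_∞²ω_{a₁}^{2i}`,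
`ω_{q_i} = |K̂^p|_∞²ω_{a₂}¹`, and `D_{d_{1i}}¹ = D_{d_{2i}}² = I`. -/
def JpS : ℝ :=
  (1 / (N : ℝ)) *
    ((∑ n, (P.sRes A n) ^ 2)
      + P.w3sq * P.w2sq * wSq (P.Da1_1sq A) (P.Ra1 A)
      + (∑ i : Fin d, P.w3sq * P.w2sq * P.w1colSq i.succ * wSq (P.Da1_2sq A i) (P.Ra1 A))
      + (∑ i : Fin d,
          P.w3sq * P.w2sq * P.w1colSq i.succ * P.w2sq * wSq (P.Da1_3sq A i) (P.Ra1 A))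
      + P.w3sq * wSq (P.Da2_1sq A) (P.Ra2 A)
      + (∑ i : Fin d, P.w3sq * P.w2sq * P.w1colSq i.succ * wSq (P.Da2_2sq A i) (P.Ra2 A))
      + nsup P.Kp0 ^ 2 * (P.w3sq * P.w2sq) * froSq (P.Rd1 A 0)
      + nsup P.Kp0 ^ 2 * P.w3sq * froSq (P.Rd2 A 0)
      + (∑ i : Fin d, nsup P.Khat ^ 2 *
          (P.w3sq * P.w2sq * P.w1colSq i.succ
            + P.w3sq * P.w2sq * P.w1colSq i.succ * P.w2sq) * froSq (P.Rd1 A i.succ))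
      + (∑ i : Fin d, P.w3sq * P.w2sq * wSq (P.Dd1_2sq A i) (P.Rd1 A i.succ))
      + (∑ i : Fin d, P.w3sq * wSq (P.Dd2_1sq A i) (P.Rd2 A i.succ))
      + (∑ i : Fin d,
          nsup P.Khat ^ 2 * (P.w3sq * P.w2sq * P.w1colSq i.succ) * froSq (P.Rd2 A i.succ))
      + (∑ i : Fin d, nsup P.Khat ^ 2 * P.w3sq * froSq (P.Rq A i)))

/-- canonical auxiliary variable `a₁ = W₁X_T + b₁𝟙ᵀ` -/
def cA1 : Fin M → Fin N → ℝ := fun j n => (∑ i, P.W1 j i * P.z n i) + P.b1 j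

/-- canonical auxiliary variable `a₂ = W₂σ(a₁) + b₂𝟙ᵀ` -/
def cA2 : Fin M → Fin N → ℝ := fun j n => (∑ k, P.W2 j k * P.σ (P.cA1 k n)) + P.b2 j

/-- canonical auxiliary variable `d_{1i} = W₁(:,i+1)𝟙ᵀ` for `i = 0, …, d` -/
def cD1 (i : Fin (d + 1)) : Fin M → Fin N → ℝ := fun j _ => P.W1 j i

/-- canonical auxiliary variable `d_{2i} = W₂(σ'(a₁)*d_{1i})` for `i = 0, …, d` -/
def cD2 (i : Fin (d + 1)) : Fin M → Fin N → ℝ :=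
  fun j n => ∑ k, P.W2 j k * (P.σ' (P.cA1 k n) * P.W1 k i)

/-- canonical auxiliary variable `q_i = W₂(σ''(a₁)*d_{1i}*d_{1i})` for `i = 1, …, d` -/
def cQ (i : Fin d) : Fin M → Fin N → ℝ :=
  fun j n => ∑ k, P.W2 j k * (P.σ'' (P.cA1 k n) * P.W1 k i.succ * P.W1 k i.succ)

/-- the canonical auxiliary variables -/
def canonAux : ParAux d M N := ⟨P.cA1, P.cA2, P.cD1, P.cD2, P.cQ⟩

end ParData
noncomputable section AuxDev

namespace ParData

open ContinuousLinearMap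

variable {d M N : ℕ} (P : ParData d M N)

/-- coordinate projection as a CLM -/
def pr (i : Fin (d + 1)) : (Fin (d + 1) → ℝ) →L[ℝ] ℝ := ContinuousLinearMap.proj i

lemma pr_single (i i' : Fin (d + 1)) : pr i (Pi.single i' (1:ℝ)) = if i = i' then 1 else 0 := by
  simp [pr, Pi.single_apply]

def a1f (k : Fin M) (y : Fin (d + 1) → ℝ) : ℝ := (∑ i, P.W1 k i * y i) + P.b1 k

def a2f (j : Fin M) (y : Fin (d + 1) → ℝ) : ℝ := (∑ k, P.W2 j k * P.σ (P.a1f k y)) + P.b2 j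

def d2f (i : Fin (d + 1)) (j : Fin M) (y : Fin (d + 1) → ℝ) : ℝ :=
  ∑ k, P.W2 j k * (P.σ' (P.a1f k y) * P.W1 k i)

def qf (i : Fin (d + 1)) (j : Fin M) (y : Fin (d + 1) → ℝ) : ℝ :=
  ∑ k, P.W2 j k * (P.σ'' (P.a1f k y) * P.W1 k i * P.W1 k i)

def dphi (i : Fin (d + 1)) (y : Fin (d + 1) → ℝ) : ℝ :=
  ∑ j, P.W3 j * (P.σ' (P.a2f j y) * P.d2f i j y)

def ddphi (i : Fin (d + 1)) (y : Fin (d + 1) → ℝ) : ℝ :=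
  ∑ j, P.W3 j * (P.σ'' (P.a2f j y) * P.d2f i j y * P.d2f i j y + P.σ' (P.a2f j y) * P.qf i j y)

def La1 (k : Fin M) : (Fin (d + 1) → ℝ) →L[ℝ] ℝ := ∑ i, P.W1 k i • pr i

def La2 (j : Fin M) (y : Fin (d + 1) → ℝ) : (Fin (d + 1) → ℝ) →L[ℝ] ℝ :=
  ∑ k, (P.W2 j k * P.σ' (P.a1f k y)) • P.La1 k

def Lphi (y : Fin (d + 1) → ℝ) : (Fin (d + 1) → ℝ) →L[ℝ] ℝ :=
  ∑ j, (P.W3 j * P.σ' (P.a2f j y)) • P.La2 j y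

def Ld2 (i : Fin (d + 1)) (j : Fin M) (y : Fin (d + 1) → ℝ) : (Fin (d + 1) → ℝ) →L[ℝ] ℝ :=
  ∑ k, (P.W2 j k * (P.W1 k i * P.σ'' (P.a1f k y))) • P.La1 k

def Ldphi (i : Fin (d + 1)) (y : Fin (d + 1) → ℝ) : (Fin (d + 1) → ℝ) →L[ℝ] ℝ :=
  ∑ j, P.W3 j • (P.σ' (P.a2f j y) • P.Ld2 i j y
    + P.d2f i j y • (P.σ'' (P.a2f j y) • P.La2 j y))

lemma hasF_a1f (k : Fin M) (y : Fin (d + 1) → ℝ) : HasFDerivAt (P.a1f k) (P.La1 k) y := by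
  have h : ∀ i : Fin (d + 1),
      HasFDerivAt (fun y : Fin (d + 1) → ℝ => P.W1 k i * y i) (P.W1 k i • pr i) y :=
    fun i => (pr i).hasFDerivAt.const_mul _
  exact (HasFDerivAt.fun_sum (fun i _ => h i)).add_const _

lemma La1_single (k : Fin M) (i : Fin (d + 1)) : P.La1 k (Pi.single i 1) = P.W1 k i := by
  simp [La1, pr, ContinuousLinearMap.sum_apply, Pi.single_apply]

section Deriv

lemma hasF_a2f (hσ1 : ∀ x, HasDerivAt P.σ (P.σ' x) x) (j : Fin M) (y : Fin (d + 1) → ℝ) : HasFDerivAt (P.a2f j) (P.La2 j y) y := by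
  have h : ∀ k : Fin M, HasFDerivAt (fun y => P.W2 j k * P.σ (P.a1f k y))
      ((P.W2 j k * P.σ' (P.a1f k y)) • P.La1 k) y := by
    intro k
    have := ((hσ1 (P.a1f k y)).comp_hasFDerivAt y (P.hasF_a1f k y)).const_mul (P.W2 j k)
    simpa [smul_smul, Function.comp] using this
  exact (HasFDerivAt.fun_sum (fun k _ => h k)).add_const _

lemma hasF_phi (hσ1 : ∀ x, HasDerivAt P.σ (P.σ' x) x) (y : Fin (d + 1) → ℝ) : HasFDerivAt P.phi (P.Lphi y) y := by
  have h : ∀ j : Fin M, HasFDerivAt (fun y => P.W3 j * P.σ (P.a2f j y))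
      ((P.W3 j * P.σ' (P.a2f j y)) • P.La2 j y) y := by
    intro j
    have := ((hσ1 (P.a2f j y)).comp_hasFDerivAt y (P.hasF_a2f hσ1 j y)).const_mul (P.W3 j)
    simpa [smul_smul, Function.comp] using this
  exact (HasFDerivAt.fun_sum (fun j _ => h j)).add_const _

lemma hasF_d2f (hσ2 : ∀ x, HasDerivAt P.σ' (P.σ'' x) x) (i : Fin (d + 1)) (j : Fin M) (y : Fin (d + 1) → ℝ) :
    HasFDerivAt (P.d2f i j) (P.Ld2 i j y) y := by
  have h : ∀ k : Fin M, HasFDerivAt (fun y => P.W2 j k * (P.σ' (P.a1f k y) * P.W1 k i))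
      ((P.W2 j k * (P.W1 k i * P.σ'' (P.a1f k y))) • P.La1 k) y := by
    intro k
    have := (((hσ2 (P.a1f k y)).comp_hasFDerivAt y (P.hasF_a1f k y)).mul_const (P.W1 k i)).const_mul
      (P.W2 j k)
    simpa [smul_smul, Function.comp, mul_comm] using this
  exact HasFDerivAt.fun_sum (fun k _ => h k)

lemma hasF_dphi (hσ1 : ∀ x, HasDerivAt P.σ (P.σ' x) x) (hσ2 : ∀ x, HasDerivAt P.σ' (P.σ'' x) x) (i : Fin (d + 1)) (y : Fin (d + 1) → ℝ) :
    HasFDerivAt (P.dphi i) (P.Ldphi i y) y := by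
  have h : ∀ j : Fin M, HasFDerivAt (fun y => P.W3 j * (P.σ' (P.a2f j y) * P.d2f i j y))
      (P.W3 j • (P.σ' (P.a2f j y) • P.Ld2 i j y
        + P.d2f i j y • (P.σ'' (P.a2f j y) • P.La2 j y))) y := by
    intro j
    have hσ' : HasFDerivAt (fun y => P.σ' (P.a2f j y)) (P.σ'' (P.a2f j y) • P.La2 j y) y := by
      exact (hσ2 (P.a2f j y)).comp_hasFDerivAt y (P.hasF_a2f hσ1 j y)
    exact (hσ'.mul (P.hasF_d2f hσ2 i j y)).const_mul _
  exact HasFDerivAt.fun_sum (fun j _ => h j)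

end Deriv

lemma La2_single (j : Fin M) (y : Fin (d + 1) → ℝ) (i : Fin (d + 1)) :
    P.La2 j y (Pi.single i 1) = P.d2f i j y := by
  simp only [La2, ContinuousLinearMap.sum_apply, ContinuousLinearMap.smul_apply, smul_eq_mul,
    La1_single, d2f]
  exact Finset.sum_congr rfl fun k _ => by ring

lemma Lphi_single (y : Fin (d + 1) → ℝ) (i : Fin (d + 1)) :
    P.Lphi y (Pi.single i 1) = P.dphi i y := by
  simp only [Lphi, ContinuousLinearMap.sum_apply, ContinuousLinearMap.smul_apply, smul_eq_mul,
    La2_single, dphi]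
  exact Finset.sum_congr rfl fun j _ => by ring

lemma Ld2_single (i : Fin (d + 1)) (j : Fin M) (y : Fin (d + 1) → ℝ) :
    P.Ld2 i j y (Pi.single i 1) = P.qf i j y := by
  simp only [Ld2, ContinuousLinearMap.sum_apply, ContinuousLinearMap.smul_apply, smul_eq_mul,
    La1_single, qf]
  exact Finset.sum_congr rfl fun k _ => by ring

lemma Ldphi_single (i : Fin (d + 1)) (y : Fin (d + 1) → ℝ) :
    P.Ldphi i y (Pi.single i 1) = P.ddphi i y := by
  simp only [Ldphi, ContinuousLinearMap.sum_apply, ContinuousLinearMap.add_apply,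
    ContinuousLinearMap.smul_apply, smul_eq_mul, La2_single, Ld2_single, ddphi]
  exact Finset.sum_congr rfl fun j _ => by ring

end ParData

end AuxDev
noncomputable section AuxDev2

namespace ParData

variable {d M N : ℕ} (P : ParData d M N)

/-- `S(y) = ‖x‖² − 1` as a function of `y = [t;x]` -/
def Sf (y : Fin (d + 1) → ℝ) : ℝ := (∑ s : Fin d, y s.succ ^ 2) - 1

def LS (y : Fin (d + 1) → ℝ) : (Fin (d + 1) → ℝ) →L[ℝ] ℝ :=
  ∑ s : Fin d, (2 * y s.succ) • pr s.succ

lemma hasF_S (y : Fin (d + 1) → ℝ) : HasFDerivAt (Sf (d := d)) (LS y) y := by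
  have h : ∀ s : Fin d, HasFDerivAt (fun y : Fin (d + 1) → ℝ => y s.succ ^ 2)
      ((2 * y s.succ) • pr s.succ) y := by
    intro s
    have hp : HasFDerivAt (fun y : Fin (d + 1) → ℝ => y s.succ) (pr s.succ) y :=
      (pr s.succ).hasFDerivAt
    have heq : (fun y : Fin (d + 1) → ℝ => y s.succ ^ 2)
        = fun y : Fin (d + 1) → ℝ => y s.succ * y s.succ := funext fun y => pow_two _
    have hL : (2 * y s.succ) • pr (d := d) s.succ
        = y s.succ • pr s.succ + y s.succ • pr s.succ := by rw [two_mul, add_smul]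
    rw [heq, hL]; exact hp.mul hp
  exact (HasFDerivAt.fun_sum (fun s _ => h s)).sub_const 1

lemma LS_single_zero (y : Fin (d + 1) → ℝ) : LS (d := d) y (Pi.single 0 1) = 0 := by
  simp [LS, pr, ContinuousLinearMap.sum_apply, Pi.single_apply, Fin.succ_ne_zero]

lemma LS_single_succ (y : Fin (d + 1) → ℝ) (i : Fin d) :
    LS (d := d) y (Pi.single i.succ 1) = 2 * y i.succ := by
  simp [LS, pr, ContinuousLinearMap.sum_apply, Pi.single_apply, Fin.succ_inj]

lemma hasF_psi (hσ1 : ∀ x, HasDerivAt P.σ (P.σ' x) x) (y : Fin (d + 1) → ℝ) :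
    HasFDerivAt P.psiP
      ((y 0 * Sf y) • P.Lphi y + P.phi y • (y 0 • LS y + Sf y • pr 0)) y := by
  have h0 : HasFDerivAt (fun y : Fin (d + 1) → ℝ => y 0) (pr 0) y := (pr 0).hasFDerivAt
  exact (h0.mul (hasF_S y)).mul (P.hasF_phi hσ1 y)

/-- closed form of `∂_{x_i}ψ_p` -/
def Ff (i : Fin d) (y : Fin (d + 1) → ℝ) : ℝ :=
  (y 0 * Sf y) * P.dphi i.succ y + P.phi y * (y 0 * (2 * y i.succ))

lemma pd_psi_zero (hσ1 : ∀ x, HasDerivAt P.σ (P.σ' x) x) (y : Fin (d + 1) → ℝ) :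
    pd P.psiP 0 y = (y 0 * Sf y) * P.dphi 0 y + P.phi y * Sf y := by
  rw [pd, (P.hasF_psi hσ1 y).fderiv]
  simp [ContinuousLinearMap.add_apply, ContinuousLinearMap.smul_apply, smul_eq_mul,
    Lphi_single, LS_single_zero, pr_single]

lemma pd_psi_succ (hσ1 : ∀ x, HasDerivAt P.σ (P.σ' x) x) (i : Fin d) (y : Fin (d + 1) → ℝ) :
    pd P.psiP i.succ y = P.Ff i y := by
  rw [pd, (P.hasF_psi hσ1 y).fderiv]
  simp only [ContinuousLinearMap.add_apply, ContinuousLinearMap.smul_apply, smul_eq_mul,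
    Lphi_single, LS_single_succ, pr_single, Ff]
  rw [if_neg fun h => (Fin.succ_ne_zero i) h.symm]
  ring

lemma hasF_Ff (hσ1 : ∀ x, HasDerivAt P.σ (P.σ' x) x) (hσ2 : ∀ x, HasDerivAt P.σ' (P.σ'' x) x)
    (i : Fin d) (y : Fin (d + 1) → ℝ) :
    HasFDerivAt (P.Ff i)
      (((y 0 * Sf y) • P.Ldphi i.succ y + P.dphi i.succ y • (y 0 • LS y + Sf y • pr 0))
        + (P.phi y • (y 0 • ((2:ℝ) • pr i.succ) + (2 * y i.succ) • pr 0)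
          + (y 0 * (2 * y i.succ)) • P.Lphi y)) y := by
  have h0 : HasFDerivAt (fun y : Fin (d + 1) → ℝ => y 0) (pr 0) y := (pr 0).hasFDerivAt
  have h2x : HasFDerivAt (fun y : Fin (d + 1) → ℝ => 2 * y i.succ) ((2:ℝ) • pr i.succ) y :=
    (pr i.succ).hasFDerivAt.const_mul 2
  exact ((h0.mul (hasF_S y)).mul (P.hasF_dphi hσ1 hσ2 i.succ y)).add
    ((P.hasF_phi hσ1 y).mul (h0.mul h2x))

end ParData

end AuxDev2
noncomputable section AuxDev3

namespace ParData

variable {d M N : ℕ} (P : ParData d M N)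

def tailL : (Fin (d + 1) → ℝ) →L[ℝ] (Fin d → ℝ) :=
  ContinuousLinearMap.pi (fun i : Fin d => pr i.succ)

lemma hasF_tail (y : Fin (d + 1) → ℝ) :
    HasFDerivAt (fun y : Fin (d + 1) → ℝ => (fun i : Fin d => y i.succ)) (tailL (d := d)) y :=
  (tailL (d := d)).hasFDerivAt

lemma tailL_single_succ (i : Fin d) :
    tailL (d := d) (Pi.single i.succ 1) = Pi.single i 1 := by
  funext k
  simp [tailL, pr, Pi.single_apply, Fin.succ_inj]

lemma houter (hσ1 : ∀ x, HasDerivAt P.σ (P.σ' x) x) (hσ2 : ∀ x, HasDerivAt P.σ' (P.σ'' x) x)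
    (hcd : Differentiable ℝ P.c) (n : Fin N) (i : Fin d) :
    pd (fun y => P.c (fun i' => y i'.succ) * pd P.psiP i.succ y) i.succ (P.z n)
      = P.cX n * ((P.T0 n * (P.Xhat n - 1)) * P.ddphi i.succ (P.z n)
          + 4 * P.T0 n * P.X i n * P.dphi i.succ (P.z n)
          + 2 * P.T0 n * P.phi (P.z n))
        + (P.T0 n * (P.Xhat n - 1) * P.dphi i.succ (P.z n)
            + 2 * P.T0 n * P.X i n * P.phi (P.z n)) * P.dcX i n := by
  have hz0 : P.z n 0 = P.T0 n := rfl
  have hzs : ∀ i' : Fin d, P.z n i'.succ = P.X i' n := fun i' => by simp [ParData.z]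
  have hSz : Sf (P.z n) = P.Xhat n - 1 := by simp [Sf, Xhat, hzs]
  have htail : (fun i' : Fin d => P.z n i'.succ) = fun i' => P.X i' n := funext hzs
  have hfun : (fun y : Fin (d+1) → ℝ => P.c (fun i' => y i'.succ) * pd P.psiP i.succ y)
      = fun y => P.c (fun i' => y i'.succ) * P.Ff i y :=
    funext fun y => by rw [P.pd_psi_succ hσ1 i y]
  have hcF : HasFDerivAt (fun y : Fin (d+1) → ℝ => P.c (fun i' => y i'.succ))
      ((fderiv ℝ P.c (fun i' => P.z n i'.succ)).comp (tailL (d := d))) (P.z n) := by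
    exact
      ((hcd (fun i' => P.z n i'.succ)).hasFDerivAt.comp (P.z n) (hasF_tail (P.z n)))
  have hprod := hcF.fun_mul (P.hasF_Ff hσ1 hσ2 i (P.z n))
  rw [pd, hfun, hprod.fderiv]
  have h0ne : ¬ ((0 : Fin (d+1)) = i.succ) := fun h => (Fin.succ_ne_zero i) h.symm
  simp only [ContinuousLinearMap.add_apply, ContinuousLinearMap.smul_apply,
    ContinuousLinearMap.comp_apply, smul_eq_mul, Ldphi_single, Lphi_single,
    LS_single_succ, pr_single, tailL_single_succ, if_pos rfl, if_neg h0ne,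
    mul_zero, mul_one, add_zero, zero_add]
  rw [hz0, hSz, htail, hzs]
  show P.c (fun i' => P.X i' n) * _ + _ * fderiv ℝ P.c (fun i' => P.X i' n) (Pi.single i 1) = _
  rw [show fderiv ℝ P.c (fun i' => P.X i' n) (Pi.single i 1) = P.dcX i n from rfl]
  show _ = P.cX n * _ + _ * P.dcX i n
  rw [show P.cX n = P.c (fun i' => P.X i' n) from rfl]
  rw [show P.Ff i (P.z n) = P.T0 n * (P.Xhat n - 1) * P.dphi i.succ (P.z n)
      + 2 * P.T0 n * P.X i n * P.phi (P.z n) by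
    simp only [Ff, hz0, hSz, hzs]; ring]
  simp only [eq_self_iff_true, if_true]
  ring

end ParData

end AuxDev3
noncomputable section AuxDev4

namespace ParData

variable {d M N : ℕ} (P : ParData d M N)

lemma sRes_canon (n : Fin N) :
    P.sRes P.canonAux n
      = P.Kp n * P.phi (P.z n) + P.Kp0 n * P.dphi 0 (P.z n)
        - (∑ i : Fin d, P.Kpi i n * P.dphi i.succ (P.z n))
        - P.Khat n * (∑ i : Fin d, P.ddphi i.succ (P.z n)) - P.Y n := rfl

lemma key (hσ1 : ∀ x, HasDerivAt P.σ (P.σ' x) x) (hσ2 : ∀ x, HasDerivAt P.σ' (P.σ'' x) x)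
    (hcd : Differentiable ℝ P.c) (n : Fin N) :
    P.pinnRes n = P.sRes P.canonAux n := by
  have hz0 : P.z n 0 = P.T0 n := rfl
  have hzs : ∀ i' : Fin d, P.z n i'.succ = P.X i' n := fun i' => by simp [ParData.z]
  have hSz : Sf (P.z n) = P.Xhat n - 1 := by simp [Sf, Xhat, hzs]
  rw [P.sRes_canon n]
  simp only [pinnRes]
  rw [P.pd_psi_zero hσ1 (P.z n), hz0, hSz]
  rw [Finset.sum_congr rfl (fun i _ => P.houter hσ1 hσ2 hcd n i)]
  have e1a : (∑ i : Fin d,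
      (P.cX n * ((P.T0 n * (P.Xhat n - 1)) * P.ddphi i.succ (P.z n)
          + 4 * P.T0 n * P.X i n * P.dphi i.succ (P.z n)
          + 2 * P.T0 n * P.phi (P.z n))
        + (P.T0 n * (P.Xhat n - 1) * P.dphi i.succ (P.z n)
            + 2 * P.T0 n * P.X i n * P.phi (P.z n)) * P.dcX i n))
      = ∑ i : Fin d,
        (P.T0 n * ((P.Xhat n - 1) * P.dcX i n + 4 * P.X i n * P.cX n) * P.dphi i.succ (P.z n)
          + (P.cX n * P.T0 n * (P.Xhat n - 1) * P.ddphi i.succ (P.z n)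
            + (2 * P.cX n * P.T0 n * P.phi (P.z n)
              + 2 * P.T0 n * P.phi (P.z n) * (P.dcX i n * P.X i n)))) :=
    Finset.sum_congr rfl fun i _ => by ring
  have p1 : (∑ i : Fin d, P.cX n * P.T0 n * (P.Xhat n - 1) * P.ddphi i.succ (P.z n))
      = P.cX n * P.T0 n * (P.Xhat n - 1) * ∑ i : Fin d, P.ddphi i.succ (P.z n) :=
    (Finset.mul_sum _ _ _).symm
  have p2 : (∑ i : Fin d, 2 * P.T0 n * P.phi (P.z n) * (P.dcX i n * P.X i n))
      = 2 * P.T0 n * P.phi (P.z n) * ∑ i : Fin d, P.dcX i n * P.X i n :=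
    (Finset.mul_sum _ _ _).symm
  rw [e1a, Finset.sum_add_distrib, Finset.sum_add_distrib, Finset.sum_add_distrib,
    p1, p2, Finset.sum_const, Finset.card_univ, Fintype.card_fin, nsmul_eq_mul]
  simp only [Kp, Kp0, Kpi, Khat]
  ring

end ParData

end AuxDev4

/-- **Theorem 3.4** (existence of auxiliary variables dominating the parabolic PINN
loss).  For all network parameters there exist auxiliary variables with `J^p_S ≤ J^p`;
in particular, the canonical choice `a₁ = W₁X_T+b₁𝟙ᵀ`, `a₂ = W₂σ(a₁)+b₂𝟙ᵀ`,
`d_{1i} = W₁(:,i+1)𝟙ᵀ`, `d_{2i} = W₂(σ'(a₁)*d_{1i})`, `q_i = W₂(σ''(a₁)*d_{1i}*d_{1i})`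
makes all penalty terms of `J^p_S` vanish and achieves `J^p_S ≤ J^p`. -/
theorem parabolic_lysep_aux_exists
    {d M N : ℕ} (hd : 0 < d) (hM : 0 < M) (hN : 0 < N)
    (T : ℝ) (hT : 0 < T)
    (P : ParData d M N)
    (hsamples : ∀ n, P.T0 n ∈ Set.Icc 0 T)
    (hσ : ContDiff ℝ 2 P.σ) (hc : ContDiff ℝ 1 P.c) :
    (∃ A : ParAux d M N, P.JpS A ≤ P.Jp) ∧
    (∀ j n, P.Ra1 P.canonAux j n = 0) ∧
    (∀ j n, P.Ra2 P.canonAux j n = 0) ∧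
    (∀ i j n, P.Rd1 P.canonAux i j n = 0) ∧
    (∀ i j n, P.Rd2 P.canonAux i j n = 0) ∧
    (∀ i j n, P.Rq P.canonAux i j n = 0) ∧
    P.JpS P.canonAux ≤ P.Jp := by
  have h2 := (contDiff_succ_iff_deriv (n := 1)).mp (by exact_mod_cast hσ)
  have hσ1 : ∀ x, HasDerivAt P.σ (P.σ' x) x := fun x => (h2.1 x).hasDerivAt
  have hσd : Differentiable ℝ (deriv P.σ) := h2.2.2.differentiable one_ne_zero
  have hσ2 : ∀ x, HasDerivAt P.σ' (P.σ'' x) x := fun x => (hσd x).hasDerivAt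
  have hcd : Differentiable ℝ P.c := hc.differentiable one_ne_zero
  have hRa1 : ∀ j n, P.Ra1 P.canonAux j n = 0 := fun j n => sub_self _
  have hRa2 : ∀ j n, P.Ra2 P.canonAux j n = 0 := fun j n => sub_self _
  have hRd1 : ∀ i j n, P.Rd1 P.canonAux i j n = 0 := fun i j n => sub_self _
  have hRd2 : ∀ i j n, P.Rd2 P.canonAux i j n = 0 := fun i j n => sub_self _
  have hRq : ∀ i j n, P.Rq P.canonAux i j n = 0 := fun i j n => sub_self _
  have w0 : ∀ (Dsq : Fin N → ℝ) (A : Fin M → Fin N → ℝ), (∀ j n, A j n = 0) → wSq Dsq A = 0 := by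
    intro D A h; simp [wSq, colSq, h]
  have f0 : ∀ (A : Fin M → Fin N → ℝ), (∀ j n, A j n = 0) → froSq A = 0 := by
    intro A h; simp [froSq, colSq, h]
  have hw1 : wSq (P.Da1_1sq P.canonAux) (P.Ra1 P.canonAux) = 0 := w0 _ _ hRa1
  have hw2 : ∀ i : Fin d, wSq (P.Da1_2sq P.canonAux i) (P.Ra1 P.canonAux) = 0 := fun _ => w0 _ _ hRa1
  have hw3 : ∀ i : Fin d, wSq (P.Da1_3sq P.canonAux i) (P.Ra1 P.canonAux) = 0 := fun _ => w0 _ _ hRa1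
  have hw4 : wSq (P.Da2_1sq P.canonAux) (P.Ra2 P.canonAux) = 0 := w0 _ _ hRa2
  have hw5 : ∀ i : Fin d, wSq (P.Da2_2sq P.canonAux i) (P.Ra2 P.canonAux) = 0 := fun _ => w0 _ _ hRa2
  have hw6 : ∀ i : Fin (d + 1), froSq (P.Rd1 P.canonAux i) = 0 := fun i => f0 _ (hRd1 i)
  have hw7 : ∀ i : Fin (d + 1), froSq (P.Rd2 P.canonAux i) = 0 := fun i => f0 _ (hRd2 i)
  have hw8 : ∀ i : Fin d, wSq (P.Dd1_2sq P.canonAux i) (P.Rd1 P.canonAux i.succ) = 0 :=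
    fun i => w0 _ _ (hRd1 i.succ)
  have hw9 : ∀ i : Fin d, wSq (P.Dd2_1sq P.canonAux i) (P.Rd2 P.canonAux i.succ) = 0 :=
    fun i => w0 _ _ (hRd2 i.succ)
  have hw10 : ∀ i : Fin d, froSq (P.Rq P.canonAux i) = 0 := fun i => f0 _ (hRq i)
  have hJ : P.JpS P.canonAux = P.Jp := by
    simp only [ParData.JpS, ParData.Jp, hw1, hw2, hw3, hw4, hw5, hw6, hw7, hw8, hw9, hw10,
      mul_zero, add_zero, Finset.sum_const_zero]
    rw [Finset.sum_congr rfl fun n _ => congrArg (· ^ 2) (P.key hσ1 hσ2 hcd n).symm]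
  exact ⟨⟨P.canonAux, le_of_eq hJ⟩, hRa1, hRa2, hRd1, hRd2, hRq, le_of_eq hJ⟩
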